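/- arXiv:2412.15472 — 2 statements merged into one kernel-verified Lean document; each statement's English description precedes it below -/
import Mathlib

section
/- Let n ≥ 2 and let f : ℝ≥0 → ℝ ∪ {−∞} be a strictly increasing function that is continuous on ℝ>0. Then the following are equivalent: (a) for every positive-admitting identical-good instance with n agents, every allocation chosen by the additive welfarist rule with f is EF1; (b) there exist constants α ∈ ℝ>0 and β ∈ ℝ such that f(x) = α·log x + β for all x ∈ ℝ≥0 (with f(0) = −∞). -/
open scoped BigOperators

noncomputable section

namespace FairDiv

/-- The bundle of goods received by agent `i` under the assignment `A` of goods to agents. -/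
def bundle {n m : ℕ} (A : Fin m → Fin n) (i : Fin n) : Finset (Fin m) :=
  Finset.univ.filter fun g => A g = i

/-- Additive utility of agent `i` for a set `S` of goods. -/
def util {n m : ℕ} (u : Fin n → Fin m → ℝ) (i : Fin n) (S : Finset (Fin m)) : ℝ :=
  ∑ g ∈ S, u i g

/-- Envy-freeness up to one good. -/
def EF1 {n m : ℕ} (u : Fin n → Fin m → ℝ) (A : Fin m → Fin n) : Prop :=
  ∀ i j : Fin n, bundle A j ≠ ∅ →
    ∃ g ∈ bundle A j, util u i ((bundle A j).erase g) ≤ util u i (bundle A i)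

/-- Welfare of an allocation under the additive welfarist rule with function `f`. -/
def welfare {n m : ℕ} (f : ℝ → EReal) (u : Fin n → Fin m → ℝ) (A : Fin m → Fin n) : EReal :=
  ∑ i : Fin n, f (util u i (bundle A i))

/-- An allocation is chosen by the additive welfarist rule with `f` if it maximizes welfare. -/
def Chosen {n m : ℕ} (f : ℝ → EReal) (u : Fin n → Fin m → ℝ) (A : Fin m → Fin n) : Prop :=
  ∀ B : Fin m → Fin n, welfare f u B ≤ welfare f u A

/-- An instance is positive-admitting if some allocation gives everyone positive utility. -/
def PositiveAdmitting {n m : ℕ} (u : Fin n → Fin m → ℝ) : Prop :=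
  ∃ B : Fin m → Fin n, ∀ i : Fin n, 0 < util u i (bundle B i)

def IdenticalGood {n m : ℕ} (u : Fin n → Fin m → ℝ) : Prop :=
  ∀ i : Fin n, ∃ a : ℝ, 0 < a ∧ ∀ g : Fin m, u i g = a

def TwoValue {n m : ℕ} (u : Fin n → Fin m → ℝ) : Prop :=
  ∃ a₁ a₂ : ℝ, a₁ ≠ a₂ ∧ 0 ≤ a₁ ∧ 0 ≤ a₂ ∧ ∀ i g, u i g = a₁ ∨ u i g = a₂

def Normalized {n m : ℕ} (u : Fin n → Fin m → ℝ) : Prop :=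
  ∀ i j : Fin n, util u i Finset.univ = util u j Finset.univ

def IntegerValued {n m : ℕ} (u : Fin n → Fin m → ℝ) : Prop :=
  ∀ i g, ∃ z : ℕ, u i g = (z : ℝ)

def Binary {n m : ℕ} (u : Fin n → Fin m → ℝ) : Prop :=
  ∀ i g, u i g = 0 ∨ u i g = 1

/-- `Δ_{f,k}(x) = f((k+1)x) − f(kx)`, valued in `EReal` (it is `+∞` iff `f(kx) = −∞`). -/
def Delta (f : ℝ → EReal) (k : ℕ) (x : ℝ) : EReal :=
  f (((k : ℝ) + 1) * x) - f ((k : ℝ) * x)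

/-- Condition 1: `Δ_{f,k}(b) > Δ_{f,k+1}(a)` for all `k ∈ ℤ≥0` and `a, b ∈ ℝ>0`. -/
def Cond1 (f : ℝ → EReal) : Prop :=
  ∀ k : ℕ, ∀ a b : ℝ, 0 < a → 0 < b → Delta f (k + 1) a < Delta f k b

/-- Condition 1a: `Δ_{f,k}` is constant on `ℝ>0` for every `k ∈ ℤ>0`. -/
def Cond1a (f : ℝ → EReal) : Prop :=
  ∀ k : ℕ, 0 < k → ∀ x y : ℝ, 0 < x → 0 < y → Delta f k x = Delta f k y

/-- Condition 2. -/
def Cond2 (f : ℝ → EReal) : Prop :=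
  ∀ a b c d : ℝ, 0 ≤ a → 0 ≤ b → 0 ≤ c → 0 ≤ d →
    min a b ≤ min c d → a * b < c * d → f a + f b < f c + f d

/-- Condition 3: `Δ_{f,k}(b) > Δ_{f,k+1}(a)` for all `k ∈ ℤ≥0` and `a, b ∈ ℤ>0`. -/
def Cond3 (f : ℝ → EReal) : Prop :=
  ∀ k : ℕ, ∀ a b : ℕ, 0 < a → 0 < b → Delta f (k + 1) (a : ℝ) < Delta f k (b : ℝ)

/-- Condition 3a. -/
def Cond3a (f : ℝ → EReal) : Prop :=
  ∀ k l : ℕ, l < k → ∀ a b : ℕ, 0 < a → 0 < b → Delta f k (a : ℝ) < Delta f l (b : ℝ)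

/-- Condition 3b: `Δ_{f,k}(1) > Δ_{f,k+1}(a) > Δ_{f,k+2}(1)` for `k ∈ ℤ≥0`, `a ∈ ℤ>0`. -/
def Cond3b (f : ℝ → EReal) : Prop :=
  ∀ k : ℕ, ∀ a : ℕ, 0 < a →
    Delta f (k + 1) (a : ℝ) < Delta f k 1 ∧ Delta f (k + 2) 1 < Delta f (k + 1) (a : ℝ)

/-- Condition 4: `Δ_{f,k}(1) > Δ_{f,k+1}(1)` for all `k ∈ ℤ≥0`. -/
def Cond4 (f : ℝ → EReal) : Prop :=
  ∀ k : ℕ, Delta f (k + 1) 1 < Delta f k 1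

/-- Condition 5. -/
def Cond5 (f : ℝ → EReal) : Prop :=
  ∀ a b k l r : ℕ, 0 < a → 0 < b → b ≤ a → l * b + r * a < (k + 1) * b →
    Delta f (k + 1) (a : ℝ) <
        f (((l : ℝ) + 1) * (b : ℝ) + (r : ℝ) * (a : ℝ)) - f ((l : ℝ) * (b : ℝ) + (r : ℝ) * (a : ℝ))
      ∧ Delta f (k + 2) 1 < Delta f (k + 1) (a : ℝ)

/-- Condition 6a: `f((k+1)b−1) − f(kb−1) > Δ_{f,k}(a)` for all `k, a, b ∈ ℤ>0`. -/
def Cond6a (f : ℝ → EReal) : Prop :=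
  ∀ k a b : ℕ, 0 < k → 0 < a → 0 < b →
    Delta f k (a : ℝ) < f (((k : ℝ) + 1) * (b : ℝ) - 1) - f ((k : ℝ) * (b : ℝ) - 1)

/-- Condition 6b: `f(y+b) − f(y) > f(x+a) − f(x)` whenever `x/a ≥ (y+1)/b`. -/
def Cond6b (f : ℝ → EReal) : Prop :=
  ∀ a b : ℕ, ∀ x y : ℕ, 0 < a → 0 < b → ((y : ℝ) + 1) / (b : ℝ) ≤ (x : ℝ) / (a : ℝ) →
    f ((x : ℝ) + (a : ℝ)) - f (x : ℝ) < f ((y : ℝ) + (b : ℝ)) - f (y : ℝ)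

/-- Modified logarithmic function `λ_c(x) = log (x + c)`, with `log 0 = −∞`. -/
def lam (c : ℝ) (x : ℝ) : EReal :=
  if x + c = 0 then ⊥ else ((Real.log (x + c) : ℝ) : EReal)

/-- The `p`-mean function `φ_p`, with `φ_p(0) = −∞` for `p ≤ 0`. -/
def phi (p : ℝ) (x : ℝ) : EReal :=
  if 0 < p then ((x ^ p : ℝ) : EReal)
  else if x = 0 then ⊥
  else if p = 0 then ((Real.log x : ℝ) : EReal)
  else ((-(x ^ p) : ℝ) : EReal)

/-- Modified harmonic number `h_c` on nonnegative integers. -/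
def hmod (c : ℝ) (x : ℕ) : EReal :=
  if c = -1 then
    (if x = 0 then (⊥ : EReal)
     else (((∑ t ∈ Finset.range (x - 1), (1 : ℝ) / ((t : ℝ) + 1)) : ℝ) : EReal))
  else (((∑ t ∈ Finset.range x, (1 : ℝ) / ((t : ℝ) + 1 + c)) : ℝ) : EReal)

/-- Condition 3b for a function defined on nonnegative integers. -/
def Cond3bNat (f : ℕ → EReal) : Prop :=
  ∀ k : ℕ, ∀ a : ℕ, 0 < a →
    f ((k + 2) * a) - f ((k + 1) * a) < f (k + 1) - f k
    ∧ f (k + 3) - f (k + 2) < f ((k + 2) * a) - f ((k + 1) * a)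

set_option linter.unusedSectionVars false
section AuxLemmas
theorem coe_fsum {ι : Type*} (s : Finset ι) (g : ι → ℝ) :
    ((∑ i ∈ s, g i : ℝ) : EReal) = ∑ i ∈ s, ((g i : ℝ) : EReal) := by
  induction s using Finset.cons_induction with
  | empty => simp
  | cons a s ha ih => simp [Finset.sum_cons, ih]

theorem util_of_const {n m : ℕ} (u : Fin n → Fin m → ℝ) (i : Fin n) (a : ℝ)
    (h : ∀ g, u i g = a) (S : Finset (Fin m)) : util u i S = a * S.card := by
  simp [util, h, mul_comm]

theorem sum_card_bundle {n m : ℕ} (A : Fin m → Fin n) :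
    ∑ i : Fin n, (bundle A i).card = m := by
  classical
  have := Finset.card_eq_sum_card_fiberwise (f := A) (s := Finset.univ) (t := Finset.univ)
    (fun x _ => Finset.mem_univ _)
  simpa [bundle] using this.symm

theorem bundle_update_self {n m : ℕ} (A : Fin m → Fin n) (g : Fin m) (i : Fin n) :
    bundle (Function.update A g i) i = insert g (bundle A i) := by
  ext x
  by_cases hx : x = g <;> simp [bundle, Function.update_apply, hx]

theorem bundle_update_ne {n m : ℕ} (A : Fin m → Fin n) (g : Fin m) (i j : Fin n) (hj : j ≠ i) :
    bundle (Function.update A g i) j = (bundle A j).erase g := by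
  ext x
  by_cases hx : x = g <;> simp [bundle, Function.update_apply, hx, (Ne.symm hj)]

theorem ef1_iff_sizes {n m : ℕ} (u : Fin n → Fin m → ℝ) (a : Fin n → ℝ) (ha : ∀ i, 0 < a i)
    (hu : ∀ i g, u i g = a i) (A : Fin m → Fin n) :
    EF1 u A ↔ ∀ i j : Fin n, (bundle A j) ≠ ∅ → (bundle A j).card ≤ (bundle A i).card + 1 := by
  constructor
  · intro h i j hne
    obtain ⟨g, hg, hle⟩ := h i j hne
    rw [util_of_const u i (a i) (hu i), util_of_const u i (a i) (hu i),
      Finset.card_erase_of_mem hg] at hle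
    have hc1 : 1 ≤ (bundle A j).card := Finset.card_pos.mpr ⟨g, hg⟩
    have := (mul_le_mul_iff_right₀ (ha i)).mp hle
    rw [Nat.cast_sub hc1] at this
    have : ((bundle A j).card : ℝ) ≤ (bundle A i).card + 1 := by push_cast at this ⊢; linarith
    exact_mod_cast this
  · intro h i j hne
    obtain ⟨g, hg⟩ := Finset.nonempty_iff_ne_empty.mpr hne
    refine ⟨g, hg, ?_⟩
    rw [util_of_const u i (a i) (hu i), util_of_const u i (a i) (hu i),
      Finset.card_erase_of_mem hg]
    have h2 := h i j hne
    have : (((bundle A j).card - 1 : ℕ) : ℝ) ≤ ((bundle A i).card : ℕ) := by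
      have : (bundle A j).card - 1 ≤ (bundle A i).card := by omega
      exact_mod_cast this
    exact mul_le_mul_of_nonneg_left this (le_of_lt (ha i))

theorem exists_chosen {n m : ℕ} (hn : 0 < n) (f : ℝ → EReal) (u : Fin n → Fin m → ℝ) :
    ∃ A : Fin m → Fin n, Chosen f u A := by
  have : Nonempty (Fin n) := Fin.pos_iff_nonempty.mp hn
  obtain ⟨A, hA⟩ := Finite.exists_max (welfare f u)
  exact ⟨A, hA⟩


set_option linter.unusedSectionVars false
theorem ef1_sizes_eq {n : ℕ} (hn : 2 ≤ n) {s : ℕ} (hs : 2 ≤ s) (k : Fin n → ℕ)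
    (hsum : ∑ i, k i = n * s)
    (hk : ∀ i j : Fin n, k j ≠ 0 → k j ≤ k i + 1) : ∀ i, k i = s := by
  have hne : ∀ i, k i ≠ 0 := by
    intro i0 h0
    have hall : ∀ j, k j ≤ 1 := by
      intro j
      by_cases hj : k j = 0
      · omega
      · have := hk i0 j hj; omega
    have : ∑ i, k i ≤ ∑ _i : Fin n, 1 := Finset.sum_le_sum fun i _ => hall i
    simp at this
    rw [hsum] at this
    have : 2 * n ≤ n * s := Nat.mul_le_mul_left n hs |>.trans (le_of_eq rfl) |> fun _ => by
      calc 2 * n = n * 2 := by ring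
      _ ≤ n * s := Nat.mul_le_mul_left n hs
    omega
  intro i
  by_contra hi
  rcases Nat.lt_or_ge (k i) s with hlt | hge
  · -- some j has k j > s
    have : ∃ j, s < k j := by
      by_contra hno
      push_neg at hno
      have hlt2 : ∑ j, k j < ∑ _j : Fin n, s := by
        apply Finset.sum_lt_sum (fun j _ => hno j) ⟨i, Finset.mem_univ i, hlt⟩
      simp [Finset.sum_const, Finset.card_univ] at hlt2
      omega
    obtain ⟨j, hj⟩ := this
    have := hk i j (by omega)
    omega
  · have hgt : s < k i := by omega
    have : ∃ j, k j < s := by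
      by_contra hno
      push_neg at hno
      have hlt2 : ∑ _j : Fin n, s < ∑ j, k j := by
        apply Finset.sum_lt_sum (fun j _ => hno j) ⟨i, Finset.mem_univ i, hgt⟩
      simp [Finset.sum_const, Finset.card_univ] at hlt2
      omega
    obtain ⟨j, hj⟩ := this
    have := hk j i (hne i)
    omega


def baseAlloc (n s : ℕ) (hs : 0 < s) : Fin (n*s) → Fin n :=
  fun g => ⟨g.val / s, by
    have hg := g.isLt
    exact (Nat.div_lt_iff_lt_mul hs).mpr hg⟩

theorem mem_baseAlloc {n s : ℕ} (hs : 0 < s) (i : Fin n) (g : Fin (n*s)) :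
    g ∈ bundle (baseAlloc n s hs) i ↔ i.val * s ≤ g.val ∧ g.val < i.val * s + s := by
  simp only [bundle, Finset.mem_filter, Finset.mem_univ, true_and, baseAlloc, Fin.ext_iff]
  constructor
  · intro h
    constructor
    · calc i.val * s = g.val / s * s := by rw [h]
        _ ≤ g.val := Nat.div_mul_le_self _ _
    · have : g.val / s < i.val + 1 := by omega
      have := (Nat.div_lt_iff_lt_mul hs).mp this
      nlinarith
  · intro ⟨h1, h2⟩
    exact Nat.div_eq_of_lt_le h1 (by nlinarith)

theorem card_baseAlloc (n s : ℕ) (hs : 0 < s) (i : Fin n) :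
    (bundle (baseAlloc n s hs) i).card = s := by
  have : (bundle (baseAlloc n s hs) i).card = (Finset.range s).card := by
    apply Finset.card_bij' (i := fun g _ => g.val - i.val * s)
      (j := fun t ht => (⟨i.val * s + t, by
        have h1 : i.val + 1 ≤ n := i.isLt
        have h2 : t < s := Finset.mem_range.mp ht
        calc i.val * s + t < i.val * s + s := by omega
          _ = (i.val + 1) * s := by ring
          _ ≤ n * s := Nat.mul_le_mul_right s h1⟩ : Fin (n*s)))
    case hi =>
      intro g hg
      rw [mem_baseAlloc hs] at hg
      exact Finset.mem_range.mpr (by omega)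
    case hj =>
      intro t ht
      rw [mem_baseAlloc hs]
      have h2 : t < s := Finset.mem_range.mp ht
      simp only [Fin.val_mk]
      omega
    case left_inv =>
      intro g hg
      rw [mem_baseAlloc hs] at hg
      apply Fin.ext
      simp only [Fin.val_mk]
      omega
    case right_inv =>
      intro t ht
      simp
  rw [this, Finset.card_range]


section Analysis
variable (F : ℝ → ℝ)

/-- `D F k x = F((k+1)x) - F(kx)`. -/
def D (k : ℕ) (x : ℝ) : ℝ := F (((k : ℝ) + 1) * x) - F ((k : ℝ) * x)

section
variable (hmono : ∀ x y : ℝ, 0 < x → x < y → F x < F y)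
variable (hkey : ∀ k : ℕ, 1 ≤ k → ∀ a b : ℝ, 0 < a → 0 < b → D F (k+1) a < D F k b)

include hmono in
theorem D_pos (k : ℕ) (hk : 1 ≤ k) (x : ℝ) (hx : 0 < x) : 0 < D F k x := by
  have h1 : (0:ℝ) < (k:ℝ) * x := by positivity
  have h2 : (k:ℝ) * x < ((k:ℝ)+1) * x := by nlinarith
  have := hmono _ _ h1 h2
  simp [D]; linarith

include hkey in
theorem chain : ∀ (k l : ℕ), 1 ≤ k → k < l → ∀ x y : ℝ, 0 < x → 0 < y →
    D F l x < D F k y := by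
  intro k l hk hl
  induction l with
  | zero => omega
  | succ l ih =>
    intro x y hx hy
    rcases Nat.lt_or_ge k l with h | h
    · have h1 : D F (l+1) x < D F l x := hkey l (by omega) x x hx hx
      exact h1.trans (ih h x y hx hy)
    · have : k = l := by omega
      subst this
      exact hkey k hk x y hx hy

/-- telescoping -/
theorem tele : ∀ (r p : ℕ) (z : ℝ),
    F (((p : ℝ) + (r : ℝ)) * z) - F ((p : ℝ) * z) = ∑ t ∈ Finset.range r, D F (p + t) z := by
  intro r
  induction r with
  | zero => intro p z; simp
  | succ r ih =>
    intro p z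
    rw [Finset.sum_range_succ, ← ih p z]
    have : ((p:ℝ) + ((r:ℕ):ℝ) + 1) = ((p:ℝ) + ((r+1 : ℕ):ℝ)) := by push_cast; ring
    simp only [D]
    push_cast
    ring

include hmono hkey in
theorem smallbound (K : ℕ) (hK : 1 ≤ K) (z : ℝ) (hz : 0 < z) :
    (K : ℝ) * D F (2*K) z < F 2 - F 1 := by
  have hKR : (0:ℝ) < (K:ℝ) := by exact_mod_cast hK
  have htele := tele F K K (1/(K:ℝ))
  have h2 : ((K:ℝ) + (K:ℝ)) * (1/(K:ℝ)) = 2 := by field_simp; ring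
  have h1 : (K:ℝ) * (1/(K:ℝ)) = 1 := by field_simp
  rw [h2, h1] at htele
  have hterm : ∀ t ∈ Finset.range K, D F (2*K) z < D F (K + t) (1/(K:ℝ)) := by
    intro t ht
    have ht' := Finset.mem_range.mp ht
    exact chain F hkey (K+t) (2*K) (by omega) (by omega) z (1/(K:ℝ)) hz (by positivity)
  have hsum : ∑ _t ∈ Finset.range K, D F (2*K) z < ∑ t ∈ Finset.range K, D F (K + t) (1/(K:ℝ)) :=
    Finset.sum_lt_sum_of_nonempty (by simp; omega) hterm
  rw [Finset.sum_const, Finset.card_range, nsmul_eq_mul] at hsum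
  linarith

include hmono hkey in
theorem smallbound' (j : ℕ) (hj : 2 ≤ j) (z : ℝ) (hz : 0 < z) :
    ((j : ℝ) - 1) * D F j z < 2 * (F 2 - F 1) := by
  set K := j / 2 with hKdef
  have hK : 1 ≤ K := by omega
  have hb := smallbound F hmono hkey K hK z hz
  have hDpos : 0 < D F j z := D_pos F hmono j (by omega) z hz
  rcases Nat.even_or_odd j with ⟨c, hc⟩ | ⟨c, hc⟩
  · have h2K : 2*K = j := by omega
    rw [h2K] at hb
    have : ((j:ℝ) - 1) * D F j z ≤ (2*(K:ℝ)) * D F j z := by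
      have : ((j:ℝ) - 1) ≤ 2*(K:ℝ) := by
        have : (j:ℝ) = 2*(K:ℝ) := by exact_mod_cast congrArg (Nat.cast : ℕ → ℝ) h2K.symm
        linarith
      nlinarith
    linarith
  · have h2K : 2*K + 1 = j := by omega
    have hlt : D F j z < D F (2*K) (z) := chain F hkey (2*K) j (by omega) (by omega) z z hz hz
    have hjr : (j:ℝ) = 2*(K:ℝ)+1 := by exact_mod_cast congrArg (Nat.cast : ℕ → ℝ) h2K.symm
    have hKR : (0:ℝ) < (K:ℝ) := by exact_mod_cast hK
    nlinarith

include hmono hkey in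
theorem D_const (k : ℕ) (hk : 1 ≤ k) (x y : ℝ) (hx : 0 < x) (hy : 0 < y) :
    D F k x = D F k y := by
  have main : ∀ x y : ℝ, 0 < x → 0 < y → ∀ ε : ℝ, 0 < ε → D F k x < D F k y + ε := by
    intro x y hx hy ε hε
    set C := F 2 - F 1 with hC
    obtain ⟨r₀, hr₀⟩ := exists_nat_gt (2*C/ε + 1)
    set r := max r₀ 2 with hrdef
    have hr2 : 2 ≤ r := le_max_right _ _
    have hrR : (r₀:ℝ) ≤ (r:ℝ) := by exact_mod_cast le_max_left _ _
    -- subdivision of D F k x with denominator r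
    have hsub : ∀ w : ℝ, 0 < w → D F k w = ∑ t ∈ Finset.range r, D F (r*k + t) (w/(r:ℝ)) := by
      intro w hw
      have := tele F r (r*k) (w/(r:ℝ))
      have hrne : ((r:ℝ)) ≠ 0 := by positivity
      have e1 : (((r*k:ℕ)):ℝ) = (r:ℝ)*(k:ℝ) := by push_cast; ring
      rw [e1] at this
      have e2 : ((r:ℝ)*(k:ℝ) + (r:ℝ)) * (w/(r:ℝ)) = ((k:ℝ)+1) * w := by field_simp
      have e3 : ((r:ℝ)*(k:ℝ)) * (w/(r:ℝ)) = (k:ℝ) * w := by field_simp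
      rw [e2, e3] at this
      exact this
    have hxr : 0 < x/(r:ℝ) := by positivity
    have hyr : 0 < y/(r:ℝ) := by positivity
    have hrk2 : 2 ≤ r*k := by nlinarith
    -- first term bound
    have hfirst : D F (r*k) (x/(r:ℝ)) < ε := by
      have hb := smallbound' F hmono hkey (r*k) hrk2 (x/(r:ℝ)) hxr
      have hrk1 : 2*C/ε < ((r*k:ℕ):ℝ) - 1 := by
        have h1 : (r₀:ℝ) > 2*C/ε + 1 := hr₀
        have h2 : ((r*k:ℕ):ℝ) = (r:ℝ)*(k:ℝ) := by push_cast; ring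
        have h3 : (r:ℝ) ≤ (r:ℝ)*(k:ℝ) := by
          have h5 : (1:ℝ) ≤ (k:ℝ) := by exact_mod_cast hk
          have h6 : (0:ℝ) < (r:ℝ) := by exact_mod_cast (show 0 < r by omega)
          nlinarith
        linarith
      have hpos : (0:ℝ) < ((r*k:ℕ):ℝ) - 1 := by
        have : (1:ℝ) < ((r*k:ℕ):ℝ) := by exact_mod_cast (by omega : 1 < r*k)
        linarith
      have := (div_lt_iff₀ hε).mp hrk1  -- 2*C < (rk-1)*ε ... careful direction
      -- from hb : (rk-1) * D < 2*C and 2*C < ((rk)-1)*ε conclude D < ε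
      have h4 : ((r*k:ℕ):ℝ) - 1 > 0 := hpos
      nlinarith [hb]
    -- termwise comparison for the rest
    have hsplit1 : ∀ g : ℕ → ℝ, ∑ t ∈ Finset.range r, g t
        = (∑ t ∈ Finset.range (r-1), g (t+1)) + g 0 := by
      obtain ⟨mm, hm⟩ : ∃ mm, r = mm+1 := ⟨r-1, by omega⟩
      intro g; rw [hm]
      simpa using Finset.sum_range_succ' g mm
    have hsplit2 : ∀ g : ℕ → ℝ, ∑ t ∈ Finset.range r, g t
        = (∑ t ∈ Finset.range (r-1), g t) + g (r-1) := by
      obtain ⟨mm, hm⟩ : ∃ mm, r = mm+1 := ⟨r-1, by omega⟩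
      intro g; rw [hm]
      simpa using Finset.sum_range_succ g mm
    have hx' : D F k x = (∑ t ∈ Finset.range (r-1), D F (r*k + (t+1)) (x/(r:ℝ)))
        + D F (r*k) (x/(r:ℝ)) := by
      rw [hsub x hx, hsplit1]; simp
    have hy' : D F k y = (∑ t ∈ Finset.range (r-1), D F (r*k + t) (y/(r:ℝ)))
        + D F (r*k + (r-1)) (y/(r:ℝ)) := by
      rw [hsub y hy, hsplit2]
    have hterm : ∀ t ∈ Finset.range (r-1),
        D F (r*k + (t+1)) (x/(r:ℝ)) < D F (r*k + t) (y/(r:ℝ)) := by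
      intro t ht
      exact chain F hkey (r*k+t) (r*k+(t+1)) (by omega) (by omega) _ _ hxr hyr
    have hsumlt : ∑ t ∈ Finset.range (r-1), D F (r*k + (t+1)) (x/(r:ℝ))
        < ∑ t ∈ Finset.range (r-1), D F (r*k + t) (y/(r:ℝ)) :=
      Finset.sum_lt_sum_of_nonempty (by simp; omega) hterm
    have hlastpos : 0 < D F (r*k + (r-1)) (y/(r:ℝ)) :=
      D_pos F hmono _ (by omega) _ hyr
    linarith
  have h1 : D F k x ≤ D F k y := by
    by_contra h
    push_neg at h
    have := main x y hx hy (D F k x - D F k y) (by linarith)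
    linarith
  have h2 : D F k y ≤ D F k x := by
    by_contra h
    push_neg at h
    have := main y x hy hx (D F k y - D F k x) (by linarith)
    linarith
  linarith

end

section
variable (hmono : ∀ x y : ℝ, 0 < x → x < y → F x < F y)
variable (hDconst : ∀ (k : ℕ), 1 ≤ k → ∀ x y : ℝ, 0 < x → 0 < y → D F k x = D F k y)
variable (htele : ∀ (r p : ℕ) (z : ℝ),
    F (((p : ℝ) + (r : ℝ)) * z) - F ((p : ℝ) * z) = ∑ t ∈ Finset.range r, D F (p + t) z)
variable (hcont : ∀ x : ℝ, 0 < x → ContinuousAt F x)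

include hDconst htele in
theorem ratstep (p q : ℕ) (hq : 1 ≤ q) (hpq : q ≤ p) (y : ℝ) (hy : 0 < y) :
    F (((p:ℝ)/(q:ℝ)) * y) - F y = F ((p:ℝ)/(q:ℝ)) - F 1 := by
  have hqR : (0:ℝ) < (q:ℝ) := by exact_mod_cast hq
  have key : ∀ w : ℝ, 0 < w →
      F (((p:ℝ)/(q:ℝ)) * w) - F w = ∑ t ∈ Finset.range (p - q), D F (q + t) (1/(q:ℝ)) := by
    intro w hw
    have h := htele (p - q) q (w/(q:ℝ))
    have e0 : (((p-q:ℕ)):ℝ) = (p:ℝ) - (q:ℝ) := Nat.cast_sub hpq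
    rw [e0] at h
    have e1 : ((q:ℝ) + ((p:ℝ) - (q:ℝ))) * (w/(q:ℝ)) = ((p:ℝ)/(q:ℝ)) * w := by field_simp; ring
    have e2 : (q:ℝ) * (w/(q:ℝ)) = w := by field_simp
    rw [e1, e2] at h
    rw [h]
    apply Finset.sum_congr rfl
    intro t ht
    exact hDconst (q+t) (by omega) _ _ (by positivity) (by positivity)
  have h1 := key y hy
  have h2 := key 1 one_pos
  rw [mul_one] at h2
  rw [h1, h2]

include hDconst htele in
theorem ratstepQ (r : ℚ) (hr : 1 ≤ r) (y : ℝ) (hy : 0 < y) :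
    F ((r:ℝ) * y) - F y = F (r:ℝ) - F 1 := by
  have hrR : (1:ℝ) ≤ (r:ℝ) := by exact_mod_cast hr
  set p : ℕ := r.num.toNat with hp
  set q : ℕ := r.den with hqd
  have hnum : (0:ℤ) < r.num := Rat.num_pos.mpr (by linarith [hr] : 0 < r)
  have hq1 : 1 ≤ q := r.pos
  have hnum' : ((p:ℕ):ℝ) = ((r.num:ℤ):ℝ) := by
    rw [hp]; exact_mod_cast congrArg (Int.cast : ℤ → ℝ) (Int.toNat_of_nonneg hnum.le)
  have hcast : (r:ℝ) = (p:ℝ)/(q:ℝ) := by rw [Rat.cast_def, ← hnum', hqd]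
  have hqR : (0:ℝ) < (q:ℝ) := by exact_mod_cast hq1
  have hpq : q ≤ p := by
    have : (q:ℝ) ≤ (p:ℝ) := by
      rw [hcast] at hrR
      exact (one_le_div hqR).mp hrR
    exact_mod_cast this
  rw [hcast]
  exact ratstep F hDconst htele p q hq1 hpq y hy

include hmono hDconst htele hcont in
theorem realstep (lam y : ℝ) (hlam : 1 ≤ lam) (hy : 0 < y) :
    F (lam * y) - F y = F lam - F 1 := by
  rcases eq_or_lt_of_le hlam with heq | hlt
  · rw [← heq]; simp
  · -- lam > 1
    have hmain : ∀ ε : ℝ, 0 < ε → |(F (lam*y) - F y) - (F lam - F 1)| < 2*ε := by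
      intro ε hε
      obtain ⟨δ, hδ, hball⟩ := Metric.continuousAt_iff.mp (hcont lam (by linarith)) ε hε
      obtain ⟨r1, hr11, hr12⟩ := exists_rat_btwn (show max 1 (lam - δ) < lam by
        rw [max_lt_iff]; exact ⟨by linarith, by linarith⟩)
      obtain ⟨r2, hr21, hr22⟩ := exists_rat_btwn (show lam < lam + δ by linarith)
      have h1r1 : (1:ℝ) < (r1:ℝ) := lt_of_le_of_lt (le_max_left _ _) hr11
      have hlr1 : lam - δ < (r1:ℝ) := lt_of_le_of_lt (le_max_right _ _) hr11
      have hr1ge : (1:ℝ) ≤ (r1:ℝ) := h1r1.le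
      have hr2ge : (1:ℝ) ≤ (r2:ℝ) := by linarith
      have hA := ratstepQ F hDconst htele r1 (by exact_mod_cast hr1ge) y hy
      have hB := ratstepQ F hDconst htele r2 (by exact_mod_cast hr2ge) y hy
      have hd1 : dist ((r1:ℝ)) lam < δ := by
        rw [Real.dist_eq, abs_sub_lt_iff]
        constructor <;> linarith
      have hd2 : dist ((r2:ℝ)) lam < δ := by
        rw [Real.dist_eq, abs_sub_lt_iff]
        constructor <;> linarith
      have hF1 : |F (r1:ℝ) - F lam| < ε := by
        have := hball hd1; rwa [Real.dist_eq] at this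
      have hF2 : |F (r2:ℝ) - F lam| < ε := by
        have := hball hd2; rwa [Real.dist_eq] at this
      have hm1 : F ((r1:ℝ)*y) < F (lam*y) := hmono _ _ (by positivity) (by nlinarith)
      have hm2 : F (lam*y) < F ((r2:ℝ)*y) := hmono _ _ (by positivity) (by nlinarith)
      have hm3 : F (r1:ℝ) < F lam := hmono _ _ (by linarith) hr12
      have hm4 : F lam < F (r2:ℝ) := hmono _ _ (by linarith) hr21
      rw [abs_sub_lt_iff]
      rw [abs_sub_lt_iff] at hF1 hF2
      constructor <;> linarith
    by_contra hne
    have habs : 0 < |(F (lam*y) - F y) - (F lam - F 1)| := by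
      apply abs_pos.mpr
      intro h
      exact hne (by linarith)
    have := hmain (|(F (lam*y) - F y) - (F lam - F 1)| / 2) (by linarith)
    linarith

include hmono hDconst htele hcont in
theorem powstep (x : ℝ) (hx : 1 ≤ x) (nn : ℕ) :
    F (x^nn) = F 1 + nn * (F x - F 1) := by
  induction nn with
  | zero => simp
  | succ nn ih =>
    have h := realstep F hmono hDconst htele hcont x (x^nn) hx (by positivity)
    rw [pow_succ, mul_comm (x^nn) x]
    push_cast
    linarith

include hmono hDconst htele hcont in
theorem ratio (x y : ℝ) (hx : 1 < x) (hy : 1 < y) :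
    (F x - F 1) * Real.log y = (F y - F 1) * Real.log x := by
  have Fle : ∀ u v : ℝ, 0 < u → u ≤ v → F u ≤ F v := by
    intro u v hu huv
    rcases eq_or_lt_of_le huv with h | h
    · rw [h]
    · exact (hmono u v hu h).le
  have Ux : 0 < F x - F 1 := by have := hmono 1 x one_pos hx; linarith
  have Uy : 0 < F y - F 1 := by have := hmono 1 y one_pos hy; linarith
  have Lx : 0 < Real.log x := Real.log_pos hx
  have Ly : 0 < Real.log y := Real.log_pos hy
  have step : ∀ xx yy : ℝ, 1 < xx → 1 < yy → ∀ p q : ℕ, 0 < p → 0 < q →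
      (p:ℝ) * Real.log xx ≤ (q:ℝ) * Real.log yy →
      (p:ℝ) * (F xx - F 1) ≤ (q:ℝ) * (F yy - F 1) := by
    intro xx yy hxx hyy p q hp hq hlog
    have hxp : xx^p ≤ yy^q := by
      have h1 : Real.log (xx^p) ≤ Real.log (yy^q) := by
        rw [Real.log_pow, Real.log_pow]; push_cast; exact hlog
      have h2 : (0:ℝ) < xx^p := by positivity
      have h3 : (0:ℝ) < yy^q := by positivity
      exact (Real.log_le_log_iff h2 h3).mp h1
    have hF := Fle (xx^p) (yy^q) (by positivity) hxp
    rw [powstep F hmono hDconst htele hcont xx hxx.le p,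
        powstep F hmono hDconst htele hcont yy hyy.le q] at hF
    linarith
  -- prove ≤ both ways
  have half : ∀ xx yy : ℝ, 1 < xx → 1 < yy →
      (F xx - F 1) * Real.log yy ≤ (F yy - F 1) * Real.log xx := by
    intro xx yy hxx hyy
    have Uxx : 0 < F xx - F 1 := by have := hmono 1 xx one_pos hxx; linarith
    have Uyy : 0 < F yy - F 1 := by have := hmono 1 yy one_pos hyy; linarith
    have Lxx : 0 < Real.log xx := Real.log_pos hxx
    have Lyy : 0 < Real.log yy := Real.log_pos hyy
    by_contra hcon
    push_neg at hcon
    -- (F yy - F1) * log xx < (F xx - F1) * log yy, i.e. Uyy/Uxx < Lyy/Lxx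
    have hlt : (F yy - F 1)/(F xx - F 1) < Real.log yy / Real.log xx := by
      rw [div_lt_div_iff₀ Uxx Lxx]
      nlinarith
    obtain ⟨rr, hrr1, hrr2⟩ := exists_rat_btwn hlt
    have hrpos : 0 < rr := by
      have : (0:ℝ) < (rr:ℝ) := lt_trans (by positivity) hrr1
      exact_mod_cast this
    set p : ℕ := rr.num.toNat with hpdef
    set q : ℕ := rr.den with hqdef
    have hnum : (0:ℤ) < rr.num := Rat.num_pos.mpr hrpos
    have hp : 0 < p := by rw [hpdef]; omega
    have hq : 0 < q := rr.pos
    have hnum' : ((p:ℕ):ℝ) = ((rr.num:ℤ):ℝ) := by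
      rw [hpdef]; exact_mod_cast congrArg (Int.cast : ℤ → ℝ) (Int.toNat_of_nonneg hnum.le)
    have hcast : (rr:ℝ) = (p:ℝ)/(q:ℝ) := by rw [Rat.cast_def, ← hnum', hqdef]
    have hqR : (0:ℝ) < (q:ℝ) := by exact_mod_cast hq
    have hpR : (0:ℝ) < (p:ℝ) := by exact_mod_cast hp
    rw [hcast] at hrr1 hrr2
    have hlog : (p:ℝ) * Real.log xx ≤ (q:ℝ) * Real.log yy := by
      rw [div_lt_div_iff₀ hqR Lxx] at hrr2
      nlinarith
    have := step xx yy hxx hyy p q hp hq hlog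
    -- p * Uxx ≤ q * Uyy gives p/q ≤ Uyy/Uxx, contradicting Uyy/Uxx < p/q
    rw [div_lt_div_iff₀ Uxx hqR] at hrr1
    nlinarith
  exact le_antisymm (half x y hx hy) (half y x hy hx)

include hmono hDconst htele hcont in
theorem final_form : ∀ x : ℝ, 0 < x →
    F x = (F (Real.exp 1) - F 1) * Real.log x + F 1 := by
  have he : (1:ℝ) < Real.exp 1 := by
    have := Real.add_one_le_exp 1
    linarith
  intro x hx
  rcases lt_trichotomy x 1 with h1 | h1 | h1
  · -- 0 < x < 1 : use realstep with lam = 1/x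
    have hinv : 1 < 1/x := by rw [lt_div_iff₀ hx]; linarith
    have hstep := realstep F hmono hDconst htele hcont (1/x) x hinv.le hx
    rw [one_div_mul_cancel (ne_of_gt hx)] at hstep
    have hform := ratio F hmono hDconst htele hcont (1/x) (Real.exp 1) hinv he
    rw [Real.log_exp] at hform
    have hlog : Real.log (1/x) = - Real.log x := by
      rw [one_div, Real.log_inv]
    rw [hlog] at hform
    -- hform : (F (1/x) - F 1) * 1 = (F e - F 1) * (- log x)
    have : F (1/x) = F 1 - (F (Real.exp 1) - F 1) * Real.log x := by linarith
    rw [this] at hstep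
    linarith
  · rw [h1]; simp
  · have hform := ratio F hmono hDconst htele hcont x (Real.exp 1) h1 he
    rw [Real.log_exp] at hform
    linarith

end
end Analysis

-- Key inequality extracted from the EF1 hypothesis
theorem key_ineq {n : ℕ} (hn : 2 ≤ n) (f : ℝ → EReal)
    (hfmono : StrictMonoOn f (Set.Ici (0 : ℝ)))
    (hftop : ∀ x : ℝ, 0 ≤ x → f x ≠ ⊤)
    (hyp : ∀ m : ℕ, ∀ u : Fin n → Fin m → ℝ, (∀ i g, 0 ≤ u i g) →
        IdenticalGood u → PositiveAdmitting u →
        ∀ A : Fin m → Fin n, Chosen f u A → EF1 u A)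
    (s : ℕ) (hs : 2 ≤ s) (a b : ℝ) (ha : 0 < a) (hb : 0 < b) :
    (f (((s:ℝ)+1)*a)).toReal + (f (((s:ℝ)-1)*b)).toReal
      < (f ((s:ℝ)*a)).toReal + (f ((s:ℝ)*b)).toReal := by
  have hfbot : ∀ x : ℝ, 0 < x → f x ≠ ⊥ := by
    intro x hx hc
    have h2 := hfmono (Set.mem_Ici.mpr (by linarith : (0:ℝ) ≤ x/2))
      (Set.mem_Ici.mpr hx.le) (by linarith : x/2 < x)
    rw [hc] at h2
    exact absurd h2 (not_lt_bot)
  have freq : ∀ x : ℝ, 0 < x → f x = (((f x).toReal : ℝ) : EReal) :=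
    fun x hx => (EReal.coe_toReal (hftop x hx.le) (hfbot x hx)).symm
  have h0n : 0 < n := by omega
  set i0 : Fin n := ⟨0, by omega⟩ with hi0def
  set i1 : Fin n := ⟨1, by omega⟩ with hi1def
  have hi01 : i0 ≠ i1 := by simp [hi0def, hi1def, Fin.ext_iff]
  set vals : Fin n → ℝ := fun i => if i = i0 then a else if i = i1 then b else 1 with hvals
  have hvpos : ∀ i, 0 < vals i := by
    intro i; simp only [hvals]; split_ifs
    · exact ha
    · exact hb
    · norm_num
  have hv0 : vals i0 = a := by simp [hvals]
  have hv1 : vals i1 = b := by simp [hvals, hi01.symm]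
  set u : Fin n → Fin (n*s) → ℝ := fun i _ => vals i with hu
  have hu0 : ∀ i g, 0 ≤ u i g := fun i _ => (hvpos i).le
  have hig : IdenticalGood u := fun i => ⟨vals i, hvpos i, fun _ => rfl⟩
  have hs0 : 0 < s := by omega
  set A0 := baseAlloc n s hs0 with hA0def
  have hcard0 : ∀ i, (bundle A0 i).card = s := card_baseAlloc n s hs0
  have hpa : PositiveAdmitting u := by
    refine ⟨A0, fun i => ?_⟩
    rw [util_of_const u i (vals i) (fun _ => rfl), hcard0]
    have : (0:ℝ) < (s:ℕ) := by exact_mod_cast hs0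
    exact mul_pos (hvpos i) this
  obtain ⟨Am, hAm⟩ := exists_chosen h0n f u
  have hef1 := hyp (n*s) u hu0 hig hpa Am hAm
  have hsz := (ef1_iff_sizes u vals hvpos (fun _ _ => rfl) Am).mp hef1
  have hksum : ∑ i, (bundle Am i).card = n*s := sum_card_bundle Am
  have hkeq : ∀ i, (bundle Am i).card = s := by
    apply ef1_sizes_eq hn hs _ hksum
    intro i j hj
    exact hsz i j (fun hemp => hj (by rw [hemp]; simp))
  -- bad allocation
  have hsm : s < n*s := by
    have : 2*s ≤ n*s := Nat.mul_le_mul_right s hn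
    omega
  set g1 : Fin (n*s) := ⟨s, hsm⟩ with hg1def
  have hA0g1 : A0 g1 = i1 := by
    apply Fin.ext
    simp [hA0def, baseAlloc, hg1def, hi1def, Nat.div_self hs0]
  set B := Function.update A0 g1 i0 with hBdef
  have hg1mem : g1 ∈ bundle A0 i1 := by simp [bundle, hA0g1]
  have hg1nmem : g1 ∉ bundle A0 i0 := by simp [bundle, hA0g1, hi01.symm]
  have hcB0 : (bundle B i0).card = s + 1 := by
    rw [hBdef, bundle_update_self, Finset.card_insert_of_notMem hg1nmem, hcard0]
  have hcB1 : (bundle B i1).card = s - 1 := by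
    rw [hBdef, bundle_update_ne A0 g1 i0 i1 hi01.symm, Finset.card_erase_of_mem hg1mem, hcard0]
  have hcBo : ∀ i, i ≠ i0 → i ≠ i1 → (bundle B i).card = s := by
    intro i hni0 hni1
    rw [hBdef, bundle_update_ne A0 g1 i0 i hni0,
      Finset.erase_eq_of_notMem (by simp [bundle, hA0g1, Ne.symm hni1]), hcard0]
  have hBcard : ∀ i, 0 < (bundle B i).card := by
    intro i
    by_cases h0 : i = i0
    · rw [h0, hcB0]; omega
    · by_cases h1 : i = i1
      · rw [h1, hcB1]; omega
      · rw [hcBo i h0 h1]; omega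
  have hBne : ¬ EF1 u B := by
    intro hE
    have hne : bundle B i0 ≠ ∅ := by
      intro hc
      have h := hcB0
      rw [hc] at h
      simp at h
    have := (ef1_iff_sizes u vals hvpos (fun _ _ => rfl) B).mp hE i1 i0 hne
    rw [hcB0, hcB1] at this
    omega
  have hBnc : ¬ Chosen f u B := fun hc => hBne (hyp (n*s) u hu0 hig hpa B hc)
  have hwB : welfare f u B < welfare f u Am := by
    rcases not_forall.mp hBnc with ⟨C, hC⟩
    exact lt_of_lt_of_le (lt_of_not_ge hC) (hAm C)
  have hwelf : ∀ (X : Fin (n*s) → Fin n), (∀ i, 0 < (bundle X i).card) →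
      welfare f u X
        = (((∑ i, (f (vals i * ((bundle X i).card : ℝ))).toReal) : ℝ) : EReal) := by
    intro X hX
    rw [welfare, coe_fsum]
    apply Finset.sum_congr rfl
    intro i _
    rw [util_of_const u i (vals i) (fun _ => rfl)]
    have h1 : (0:ℝ) < ((bundle X i).card : ℝ) := by exact_mod_cast hX i
    exact freq _ (mul_pos (hvpos i) h1)
  have hAmcard : ∀ i, 0 < (bundle Am i).card := by intro i; rw [hkeq i]; omega
  rw [hwelf B hBcard, hwelf Am hAmcard] at hwB
  have hreal := EReal.coe_lt_coe_iff.mp hwB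
  -- decompose the sums
  set wB : Fin n → ℝ := fun i => (f (vals i * ((bundle B i).card : ℝ))).toReal with hwBdef
  set wA : Fin n → ℝ := fun i => (f (vals i * ((bundle Am i).card : ℝ))).toReal with hwAdef
  have hi1mem : i1 ∈ Finset.univ.erase i0 := Finset.mem_erase.mpr ⟨hi01.symm, Finset.mem_univ _⟩
  have hd1 : ∀ (w : Fin n → ℝ),
      ∑ i, w i = w i0 + (w i1 + ∑ i ∈ (Finset.univ.erase i0).erase i1, w i) := by
    intro w
    rw [Finset.add_sum_erase _ w hi1mem, Finset.add_sum_erase _ w (Finset.mem_univ i0)]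
  rw [hd1 wB, hd1 wA] at hreal
  have hrest : ∑ i ∈ (Finset.univ.erase i0).erase i1, wB i
      = ∑ i ∈ (Finset.univ.erase i0).erase i1, wA i := by
    apply Finset.sum_congr rfl
    intro i hi
    have hni1 : i ≠ i1 := (Finset.mem_erase.mp hi).1
    have hni0 : i ≠ i0 := (Finset.mem_erase.mp (Finset.mem_erase.mp hi).2).1
    simp only [hwBdef, hwAdef]
    rw [hcBo i hni0 hni1, hkeq i]
  rw [hrest] at hreal
  have e1 : wB i0 = (f (((s:ℝ)+1)*a)).toReal := by
    simp only [hwBdef]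
    rw [hcB0, hv0]
    push_cast
    ring_nf
  have e2 : wB i1 = (f (((s:ℝ)-1)*b)).toReal := by
    simp only [hwBdef]
    rw [hcB1, hv1, Nat.cast_sub (by omega : 1 ≤ s)]
    push_cast
    ring_nf
  have e3 : wA i0 = (f ((s:ℝ)*a)).toReal := by
    simp only [hwAdef]; rw [hkeq i0, hv0, mul_comm]
  have e4 : wA i1 = (f ((s:ℝ)*b)).toReal := by
    simp only [hwAdef]; rw [hkeq i1, hv1, mul_comm]
  rw [e1, e2, e3, e4] at hreal
  linarith

theorem backward_dir {n : ℕ} (f : ℝ → EReal)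
    (α β : ℝ) (hα : 0 < α) (hbot : f 0 = ⊥)
    (hform : ∀ x : ℝ, 0 < x → f x = ((α * Real.log x + β : ℝ) : EReal))
    {m : ℕ} (u : Fin n → Fin m → ℝ)
    (hig : IdenticalGood u) (hpa : PositiveAdmitting u)
    (A : Fin m → Fin n) (hA : Chosen f u A) : EF1 u A := by
  choose a haa using hig
  have hapos : ∀ i, 0 < a i := fun i => (haa i).1
  have hu : ∀ i g, u i g = a i := fun i g => (haa i).2 g
  obtain ⟨B, hB⟩ := hpa
  have hBcard : ∀ i, 0 < (bundle B i).card := by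
    intro i
    have h := hB i
    rw [util_of_const u i (a i) (hu i)] at h
    rcases Nat.eq_zero_or_pos (bundle B i).card with h0 | h0
    · rw [h0] at h; simp at h
    · exact h0
  have hwelf : ∀ (X : Fin m → Fin n), (∀ i, 0 < (bundle X i).card) →
      welfare f u X
        = (((∑ i, (α * Real.log (a i * ((bundle X i).card : ℝ)) + β)) : ℝ) : EReal) := by
    intro X hX
    rw [welfare, coe_fsum]
    apply Finset.sum_congr rfl
    intro i _
    rw [util_of_const u i (a i) (hu i)]
    have h1 : (0:ℝ) < ((bundle X i).card : ℝ) := by exact_mod_cast hX i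
    exact hform _ (mul_pos (hapos i) h1)
  have hne : ∀ i, (bundle A i) ≠ ∅ := by
    by_contra h
    push_neg at h
    obtain ⟨i0, h0⟩ := h
    have hwA : welfare f u A = ⊥ := by
      rw [welfare, ← Finset.add_sum_erase _ _ (Finset.mem_univ i0)]
      have hz : util u i0 (bundle A i0) = 0 := by rw [h0]; simp [util]
      rw [hz, hbot, EReal.bot_add]
    have hle := hA B
    rw [hwA, hwelf B hBcard] at hle
    exact absurd hle (not_le.mpr (EReal.bot_lt_coe _))
  have hAcard : ∀ i, 0 < (bundle A i).card :=
    fun i => Finset.card_pos.mpr (Finset.nonempty_iff_ne_empty.mpr (hne i))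
  have hsz : ∀ i j, (bundle A j).card ≤ (bundle A i).card + 1 := by
    intro i j
    by_contra hcon
    push_neg at hcon
    have hij : i ≠ j := by
      intro he; rw [he] at hcon; omega
    obtain ⟨g1, hg1⟩ := Finset.card_pos.mp (hAcard j)
    have hAg1 : A g1 = j := by simpa [bundle] using hg1
    set C := Function.update A g1 i with hCdef
    have hg1ni : g1 ∉ bundle A i := by simp [bundle, hAg1, hij.symm]
    have hCi : (bundle C i).card = (bundle A i).card + 1 := by
      rw [hCdef, bundle_update_self, Finset.card_insert_of_notMem hg1ni]
    have hCj : (bundle C j).card = (bundle A j).card - 1 := by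
      rw [hCdef, bundle_update_ne A g1 i j (Ne.symm hij), Finset.card_erase_of_mem hg1]
    have hCo : ∀ l, l ≠ i → l ≠ j → (bundle C l).card = (bundle A l).card := by
      intro l hli hlj
      rw [hCdef, bundle_update_ne A g1 i l hli,
        Finset.erase_eq_of_notMem (by simp [bundle, hAg1, Ne.symm hlj])]
    have hCcard : ∀ l, 0 < (bundle C l).card := by
      intro l
      by_cases hl : l = i
      · rw [hl, hCi]; omega
      · by_cases hl2 : l = j
        · rw [hl2, hCj]; have := hAcard i; omega
        · rw [hCo l hl hl2]; exact hAcard l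
    -- strict welfare improvement
    have hlt : welfare f u A < welfare f u C := by
      rw [hwelf A hAcard, hwelf C hCcard]
      rw [EReal.coe_lt_coe_iff]
      set wA : Fin n → ℝ := fun l => α * Real.log (a l * ((bundle A l).card : ℝ)) + β with hwA
      set wC : Fin n → ℝ := fun l => α * Real.log (a l * ((bundle C l).card : ℝ)) + β with hwC
      have hjmem : j ∈ Finset.univ.erase i := Finset.mem_erase.mpr ⟨Ne.symm hij, Finset.mem_univ _⟩
      have hd1 : ∀ (w : Fin n → ℝ),
          ∑ l, w l = w i + (w j + ∑ l ∈ (Finset.univ.erase i).erase j, w l) := by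
        intro w
        rw [Finset.add_sum_erase _ w hjmem, Finset.add_sum_erase _ w (Finset.mem_univ i)]
      rw [hd1 wA, hd1 wC]
      have hrest : ∑ l ∈ (Finset.univ.erase i).erase j, wA l
          = ∑ l ∈ (Finset.univ.erase i).erase j, wC l := by
        apply Finset.sum_congr rfl
        intro l hl
        have hlj : l ≠ j := (Finset.mem_erase.mp hl).1
        have hli : l ≠ i := (Finset.mem_erase.mp (Finset.mem_erase.mp hl).2).1
        simp only [hwA, hwC, hCo l hli hlj]
      rw [hrest]
      have hmain : wA i + wA j < wC i + wC j := by
        simp only [hwA, hwC, hCi, hCj]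
        set ki : ℝ := ((bundle A i).card : ℝ) with hki
        set kj : ℝ := ((bundle A j).card : ℝ) with hkj
        have hki1 : (1:ℝ) ≤ ki := by rw [hki]; exact_mod_cast hAcard i
        have hkj2 : ki + 2 ≤ kj := by
          rw [hki, hkj]
          have : (bundle A i).card + 2 ≤ (bundle A j).card := by omega
          exact_mod_cast this
        have hcast1 : (((bundle A i).card + 1 : ℕ) : ℝ) = ki + 1 := by rw [hki]; push_cast; ring
        have hcast2 : (((bundle A j).card - 1 : ℕ) : ℝ) = kj - 1 := by
          rw [hkj, Nat.cast_sub (by omega : 1 ≤ (bundle A j).card)]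
          push_cast; ring
        rw [hcast1, hcast2]
        have h1 := hapos i
        have h2 := hapos j
        have hki0 : (0:ℝ) < ki := by linarith
        have hkj0 : (0:ℝ) < kj := by linarith
        have hprod : (a i * ki) * (a j * kj) < (a i * (ki+1)) * (a j * (kj-1)) := by
          have hkey : 0 < (a i * a j) * (kj - ki - 1) :=
            mul_pos (mul_pos h1 h2) (by linarith)
          nlinarith [hkey]
        have hlog := Real.log_lt_log (mul_pos (mul_pos h1 hki0) (mul_pos h2 hkj0)) hprod
        rw [Real.log_mul (ne_of_gt (mul_pos h1 hki0)) (ne_of_gt (mul_pos h2 hkj0)),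
            Real.log_mul (ne_of_gt (mul_pos h1 (by linarith : (0:ℝ) < ki+1)))
              (ne_of_gt (mul_pos h2 (by linarith : (0:ℝ) < kj-1)))] at hlog
        have hmul := mul_lt_mul_of_pos_left hlog hα
        rw [mul_add, mul_add] at hmul
        linarith
      linarith
    exact absurd (hA C) (not_le.mpr hlt)
  intro i j hnej
  obtain ⟨g, hg⟩ := Finset.nonempty_iff_ne_empty.mpr hnej
  refine ⟨g, hg, ?_⟩
  rw [util_of_const u i (a i) (hu i), util_of_const u i (a i) (hu i),
    Finset.card_erase_of_mem hg]
  have h := hsz i j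
  have hcast : (((bundle A j).card - 1 : ℕ):ℝ) ≤ ((bundle A i).card:ℝ) := by
    exact_mod_cast (by omega : (bundle A j).card - 1 ≤ (bundle A i).card)
  exact mul_le_mul_of_nonneg_left hcast (hapos i).le

end AuxLemmas

theorem real_idengood (n : ℕ) (hn : 2 ≤ n) (f : ℝ → EReal)
    (hfmono : StrictMonoOn f (Set.Ici (0 : ℝ)))
    (hftop : ∀ x : ℝ, 0 ≤ x → f x ≠ ⊤)
    (hfcont : ContinuousOn f (Set.Ioi (0 : ℝ))) :
    (∀ m : ℕ, ∀ u : Fin n → Fin m → ℝ, (∀ i g, 0 ≤ u i g) →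
        IdenticalGood u → PositiveAdmitting u →
        ∀ A : Fin m → Fin n, Chosen f u A → EF1 u A)
    ↔ (∃ α β : ℝ, 0 < α ∧ f 0 = ⊥ ∧
        ∀ x : ℝ, 0 < x → f x = ((α * Real.log x + β : ℝ) : EReal)) := by

  constructor
  · intro hyp
    have hfbot : ∀ x : ℝ, 0 < x → f x ≠ ⊥ := by
      intro x hx hc
      have h2 := hfmono (Set.mem_Ici.mpr (by linarith : (0:ℝ) ≤ x/2))
        (Set.mem_Ici.mpr hx.le) (by linarith : x/2 < x)
      rw [hc] at h2
      exact absurd h2 not_lt_bot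
    set F : ℝ → ℝ := fun x => (f x).toReal with hF
    have hFr : ∀ x, (f x).toReal = F x := fun _ => rfl
    have freq : ∀ x : ℝ, 0 < x → f x = ((F x : ℝ) : EReal) :=
      fun x hx => (EReal.coe_toReal (hftop x hx.le) (hfbot x hx)).symm
    have hmono' : ∀ x y : ℝ, 0 < x → x < y → F x < F y := by
      intro x y hx hxy
      have h := hfmono (Set.mem_Ici.mpr hx.le) (Set.mem_Ici.mpr (hx.trans hxy).le) hxy
      rw [freq x hx, freq y (hx.trans hxy)] at h
      exact EReal.coe_lt_coe_iff.mp h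
    have hcont' : ∀ x : ℝ, 0 < x → ContinuousAt F x := by
      intro x hx
      have h1 : ContinuousAt f x := hfcont.continuousAt (Ioi_mem_nhds hx)
      have h2 : Filter.Tendsto (fun y => ((F y : ℝ) : EReal)) (nhds x)
          (nhds ((F x : ℝ) : EReal)) := by
        rw [← freq x hx]
        exact Filter.Tendsto.congr'
          (Filter.eventuallyEq_of_mem (Ioi_mem_nhds hx) (fun y hy => (freq y hy).symm)).symm h1
      exact EReal.tendsto_coe.mp h2
    have hkey : ∀ k : ℕ, 1 ≤ k → ∀ a b : ℝ, 0 < a → 0 < b → D F (k+1) a < D F k b := by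
      intro k hk a b ha hb
      have h := key_ineq hn f hfmono hftop hyp (k+1) (by omega) a b ha hb
      simp only [hFr] at h
      simp only [D]
      push_cast at h ⊢
      ring_nf at h ⊢
      linarith
    have hDconst := D_const F hmono' hkey
    have hform := final_form F hmono' hDconst (tele F) hcont'
    have he1 : (1:ℝ) < Real.exp 1 := by
      have := Real.add_one_le_exp 1; linarith
    have hα : 0 < F (Real.exp 1) - F 1 := by
      have := hmono' 1 (Real.exp 1) one_pos he1
      linarith
    refine ⟨F (Real.exp 1) - F 1, F 1, hα, ?_, ?_⟩
    · by_contra hne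
      have htop0 : f 0 ≠ ⊤ := hftop 0 le_rfl
      have h0 : f 0 = (((f 0).toReal : ℝ) : EReal) := (EReal.coe_toReal htop0 hne).symm
      set c := (f 0).toReal with hc
      set α := F (Real.exp 1) - F 1 with hαdef
      set x := Real.exp ((c - F 1 - 1)/α) with hxdef
      have hx : 0 < x := Real.exp_pos _
      have hlt := hfmono (Set.mem_Ici.mpr le_rfl) (Set.mem_Ici.mpr hx.le) hx
      rw [h0, freq x hx] at hlt
      have hlt2 : c < F x := EReal.coe_lt_coe_iff.mp hlt
      have hFx : F x = c - 1 := by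
        rw [hform x hx, hxdef, Real.log_exp]
        field_simp
        ring
      rw [hFx] at hlt2
      linarith
    · intro x hx
      rw [freq x hx, hform x hx]
  · rintro ⟨α, β, hα, hbot, hform⟩ m u hu0 hig hpa A hA
    exact backward_dir f α β hα hbot hform u hig hpa A hA


end FairDiv
end
end

section
/- Let f : ℝ≥0 → ℝ ∪ {−∞} be a strictly increasing function that is continuous on ℝ>0, and suppose that for every positive-admitting normalized instance with two agents, every allocation chosen by the additive welfarist rule with f is EF1. Then f is strictly concave, i.e., for any distinct x, y ∈ ℝ≥0 and α ∈ (0, 1), f(αx + (1−α)y) > α·f(x) + (1−α)·f(y). -/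
open scoped BigOperators

noncomputable section

namespace FairDiv

open Filter Topology

lemma util_const {m : ℕ} {ε : ℝ} (i : Fin 2) (S : Finset (Fin m)) :
    util (fun (_ : Fin 2) (_ : Fin m) => ε) i S = (S.card : ℝ) * ε := by
  simp [util, Finset.sum_const, nsmul_eq_mul]

lemma bundle_card_sum {m : ℕ} (A : Fin m → Fin 2) :
    (bundle A 0).card + (bundle A 1).card = m := by
  classical
  have h1 : bundle A 1 = Finset.univ.filter fun g => ¬ (A g = 0) := by
    unfold bundle
    apply Finset.filter_congr
    intro g _
    have : ∀ i : Fin 2, i = 1 ↔ ¬ (i = 0) := by decide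
    simp [this (A g)]
  rw [h1]
  rw [bundle, Finset.card_filter_add_card_filter_not]
  simp

lemma welfare_two {m : ℕ} (f : ℝ → EReal) (u : Fin 2 → Fin m → ℝ) (A : Fin m → Fin 2) :
    welfare f u A = f (util u 0 (bundle A 0)) + f (util u 1 (bundle A 1)) := by
  simp [welfare, Fin.sum_univ_two]

lemma card_filter_val_lt {m j : ℕ} (h : j < m) :
    ((Finset.univ : Finset (Fin m)).filter fun g : Fin m => (g : ℕ) < j).card = j := by
  have he : ((Finset.univ : Finset (Fin m)).filter fun g : Fin m => (g : ℕ) < j)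
      = Finset.Iio (⟨j, h⟩ : Fin m) := by
    ext g
    simp [Finset.mem_Iio, Fin.lt_def]
  rw [he, Fin.card_Iio]

lemma lemA (f : ℝ → EReal)
    (hEF1 : ∀ m : ℕ, ∀ u : Fin 2 → Fin m → ℝ, (∀ i g, 0 ≤ u i g) →
        Normalized u → PositiveAdmitting u →
        ∀ A : Fin m → Fin 2, Chosen f u A → EF1 u A)
    {ε : ℝ} (hε : 0 < ε) (j : ℕ) :
    f ((j : ℝ) * ε) + f (((j : ℝ) + 2) * ε) < f (((j : ℝ) + 1) * ε) + f (((j : ℝ) + 1) * ε) := by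
  classical
  set m : ℕ := 2 * j + 2 with hm
  set u : Fin 2 → Fin m → ℝ := fun _ _ => ε with hu
  have hnn : ∀ i g, 0 ≤ u i g := fun _ _ => hε.le
  have hnorm : Normalized u := fun _ _ => rfl
  -- positive admitting
  have hPA : PositiveAdmitting u := by
    refine ⟨fun g => if (g : ℕ) ≤ j then 0 else 1, fun i => ?_⟩
    rw [util_const]
    have hcard : 0 < (bundle (fun g : Fin m => if (g : ℕ) ≤ j then (0 : Fin 2) else 1) i).card := by
      rw [Finset.card_pos]
      fin_cases i
      · exact ⟨⟨0, by omega⟩, by simp [bundle]⟩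
      · exact ⟨⟨j + 1, by omega⟩, by simp [bundle]⟩
    positivity
  -- the maximizer
  obtain ⟨Astar, -, hmax⟩ := Finset.exists_max_image (Finset.univ : Finset (Fin m → Fin 2))
    (welfare f u) ⟨fun _ => 0, Finset.mem_univ _⟩
  have hchosen : Chosen f u Astar := fun B => hmax B (Finset.mem_univ _)
  have hstarEF1 : EF1 u Astar := hEF1 m u hnn hnorm hPA Astar hchosen
  -- EF1 numeric consequence
  have keyEF1 : ∀ (A : Fin m → Fin 2), EF1 u A → ∀ i k : Fin 2,
      (bundle A k).card ≠ 0 → (bundle A k).card - 1 ≤ (bundle A i).card := by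
    intro A hA i k hk
    have hne : bundle A k ≠ ∅ := by
      intro h; exact hk (by rw [h]; simp)
    obtain ⟨g, hg, hle⟩ := hA i k hne
    rw [util_const, util_const, Finset.card_erase_of_mem hg] at hle
    have := le_of_mul_le_mul_right hle hε
    exact_mod_cast this
  -- the maximizer is balanced
  have hsum := bundle_card_sum Astar
  set s : ℕ := (bundle Astar 0).card with hs
  set t : ℕ := (bundle Astar 1).card with ht
  have h01 : t ≠ 0 → t - 1 ≤ s := keyEF1 Astar hstarEF1 0 1
  have h10 : s ≠ 0 → s - 1 ≤ t := keyEF1 Astar hstarEF1 1 0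
  have hbal : s = j + 1 ∧ t = j + 1 := by omega
  have hwstar : welfare f u Astar = f (((j : ℝ) + 1) * ε) + f (((j : ℝ) + 1) * ε) := by
    rw [welfare_two, util_const, util_const, ← hs, ← ht, hbal.1, hbal.2]
    push_cast
    ring_nf
  -- the unbalanced allocation
  set Aj : Fin m → Fin 2 := fun g => if (g : ℕ) < j then 0 else 1 with hAj
  have hb0 : (bundle Aj 0).card = j := by
    have : bundle Aj 0 = (Finset.univ : Finset (Fin m)).filter fun g : Fin m => (g : ℕ) < j := by
      unfold bundle
      apply Finset.filter_congr
      intro g _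
      by_cases h : (g : ℕ) < j <;> simp [hAj, h]
    rw [this, card_filter_val_lt (by omega)]
  have hb1 : (bundle Aj 1).card = j + 2 := by
    have := bundle_card_sum Aj
    omega
  have hnotEF1 : ¬ EF1 u Aj := by
    intro hA
    have := keyEF1 Aj hA 0 1 (by omega)
    omega
  have hlt : welfare f u Aj < welfare f u Astar := by
    refine lt_of_le_of_ne (hchosen Aj) (fun heq => hnotEF1 ?_)
    exact hEF1 m u hnn hnorm hPA Aj (fun B => le_of_le_of_eq (hchosen B) heq.symm)
  rw [hwstar] at hlt
  rw [welfare_two, util_const, util_const, hb0, hb1] at hlt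
  convert hlt using 4 <;> push_cast <;> ring
/-- Grid concavity from the three-term strict inequalities. -/
lemma gridC (F : ℝ → ℝ) {ε : ℝ} (hε : 0 < ε) (a₀ : ℕ)
    (h3 : ∀ j : ℕ, a₀ ≤ j →
      F ((j : ℝ) * ε) + F (((j : ℝ) + 2) * ε) < 2 * F (((j : ℝ) + 1) * ε)) :
    ∀ a c b : ℕ, a₀ ≤ a → a < c → c < b →
      ((b : ℝ) - c) * F ((a : ℝ) * ε) + ((c : ℝ) - a) * F ((b : ℝ) * ε)
        < ((b : ℝ) - a) * F ((c : ℝ) * ε) := by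
  intro a c b ha hac hcb
  set g : ℕ → ℝ := fun k => F ((k : ℝ) * ε) with hg
  set D : ℕ → ℝ := fun k => g (k + 1) - g k with hD
  have h3' : ∀ j : ℕ, a₀ ≤ j → D (j + 1) < D j := by
    intro j hj
    have := h3 j hj
    simp only [hD, hg]
    push_cast
    ring_nf
    ring_nf at this
    linarith
  have Dmono : ∀ p q : ℕ, a₀ ≤ p → p ≤ q → D q ≤ D p := by
    intro p q hp hpq
    induction q, hpq using Nat.le_induction with
    | base => exact le_refl _
    | succ n hn ih => exact le_trans (h3' n (le_trans hp hn)).le ih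
  have tele : ∀ p q : ℕ, p ≤ q → g q - g p = ∑ i ∈ Finset.Ico p q, D i := by
    intro p q hpq
    rw [Finset.sum_Ico_eq_sub _ hpq]
    have t1 : ∀ r : ℕ, ∑ i ∈ Finset.range r, D i = g r - g 0 := by
      intro r; simp only [hD]; exact Finset.sum_range_sub g r
    rw [t1, t1]; ring
  have lb : ((c : ℝ) - a) * D (c - 1) ≤ g c - g a := by
    rw [tele a c hac.le]
    have hcard : ((Finset.Ico a c).card) • D (c - 1) ≤ ∑ i ∈ Finset.Ico a c, D i := by
      apply Finset.card_nsmul_le_sum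
      intro i hi
      rw [Finset.mem_Ico] at hi
      exact Dmono i (c - 1) (by omega) (by omega)
    rw [Nat.card_Ico, nsmul_eq_mul] at hcard
    calc ((c : ℝ) - a) * D (c - 1) = ((c - a : ℕ) : ℝ) * D (c - 1) := by
          rw [Nat.cast_sub hac.le]
      _ ≤ _ := hcard
  have ub : g b - g c ≤ ((b : ℝ) - c) * D c := by
    rw [tele c b hcb.le]
    have hcard : ∑ i ∈ Finset.Ico c b, D i ≤ ((Finset.Ico c b).card) • D c := by
      apply Finset.sum_le_card_nsmul
      intro i hi
      rw [Finset.mem_Ico] at hi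
      exact Dmono c i (by omega) hi.1
    rw [Nat.card_Ico, nsmul_eq_mul] at hcard
    exact hcard.trans (le_of_eq (by rw [Nat.cast_sub hcb.le]))
  have hstrict : D c < D (c - 1) := by
    have h1 : c - 1 + 1 = c := by omega
    have := h3' (c - 1) (by omega)
    rwa [h1] at this
  have hca : (0 : ℝ) < (c : ℝ) - a := by
    have : (a : ℝ) < c := by exact_mod_cast hac
    linarith
  have hbc : (0 : ℝ) < (b : ℝ) - c := by
    have : (c : ℝ) < b := by exact_mod_cast hcb
    linarith
  show ((b : ℝ) - c) * g a + ((c : ℝ) - a) * g b < ((b : ℝ) - a) * g c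
  nlinarith [mul_lt_mul_of_pos_left hstrict (mul_pos hca hbc),
    mul_le_mul_of_nonneg_left lb hbc.le, mul_le_mul_of_nonneg_left ub hca.le]

lemma ceil_div_tendsto (x : ℝ) (hx : 0 ≤ x) :
    Tendsto (fun n : ℕ => ((⌈x * n⌉₊ : ℝ)) / n) atTop (𝓝 x) := by
  apply tendsto_of_tendsto_of_tendsto_of_le_of_le' (tendsto_const_nhds)
    (g := fun _ => x) (h := fun n : ℕ => x + 1 / n)
  · have : Tendsto (fun n : ℕ => x + 1 / (n : ℝ)) atTop (𝓝 (x + 0)) :=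
      tendsto_const_nhds.add tendsto_one_div_atTop_nhds_zero_nat
    simpa using this
  · filter_upwards [eventually_ge_atTop 1] with n hn
    have hn' : (0 : ℝ) < n := by exact_mod_cast hn
    rw [le_div_iff₀ hn']
    exact_mod_cast Nat.le_ceil (x * n)
  · filter_upwards [eventually_ge_atTop 1] with n hn
    have hn' : (0 : ℝ) < n := by exact_mod_cast hn
    rw [div_le_iff₀ hn']
    have h1 : (⌈x * n⌉₊ : ℝ) < x * n + 1 :=
      Nat.ceil_lt_add_one (by positivity)
    have h2 : (x + 1 / n) * n = x * n + 1 := by field_simp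
    linarith

lemma Fcomp_tendsto (F : ℝ → ℝ) (hcont : ContinuousOn F (Set.Ioi (0 : ℝ)))
    {x : ℝ} (hx : 0 < x) :
    Tendsto (fun n : ℕ => F ((⌈x * n⌉₊ : ℝ) / n)) atTop (𝓝 (F x)) := by
  have h1 : Tendsto (fun n : ℕ => ((⌈x * n⌉₊ : ℝ)) / n) atTop (𝓝[Set.Ioi 0] x) := by
    rw [tendsto_nhdsWithin_iff]
    refine ⟨ceil_div_tendsto x hx.le, ?_⟩
    filter_upwards [eventually_ge_atTop 1] with n hn
    have hn' : (0 : ℝ) < n := by exact_mod_cast hn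
    have : x * n ≤ (⌈x * n⌉₊ : ℝ) := Nat.le_ceil _
    have : 0 < (⌈x * n⌉₊ : ℝ) / n := by
      apply div_pos _ hn'
      nlinarith
    exact this
  exact (hcont x hx).tendsto.comp h1

/-- Weak concavity inequality via a limit of grid inequalities. -/
lemma weakD (F : ℝ → ℝ) (hcont : ContinuousOn F (Set.Ioi (0 : ℝ))) (a₀ : ℕ)
    (hgrid : ∀ ε : ℝ, 0 < ε → ∀ j : ℕ, a₀ ≤ j →
      F ((j : ℝ) * ε) + F (((j : ℝ) + 2) * ε) < 2 * F (((j : ℝ) + 1) * ε))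
    {x z y : ℝ} (hx : 0 ≤ x) (hx0 : 0 < x ∨ a₀ = 0)
    (hxz : x < z) (hzy : z < y) :
    (y - z) * F x + (z - x) * F y ≤ (y - x) * F z := by
  have hz : 0 < z := lt_of_le_of_lt hx hxz
  have hy : 0 < y := lt_trans hz hzy
  set pa : ℕ → ℝ := fun n => ((⌈x * n⌉₊ : ℝ)) / n with hpa
  set pc : ℕ → ℝ := fun n => ((⌈z * n⌉₊ : ℝ)) / n with hpc
  set pb : ℕ → ℝ := fun n => ((⌈y * n⌉₊ : ℝ)) / n with hpb
  -- convergence of F along the three sequences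
  have TFa : Tendsto (fun n : ℕ => F (pa n)) atTop (𝓝 (F x)) := by
    rcases hx.lt_or_eq with hx' | hx'
    · exact Fcomp_tendsto F hcont hx'
    · have hpa0 : ∀ n : ℕ, pa n = 0 := by
        intro n; simp [hpa, ← hx', Nat.ceil_eq_zero.2]
      simp only [hpa0, ← hx']
      exact tendsto_const_nhds
  have TFc : Tendsto (fun n : ℕ => F (pc n)) atTop (𝓝 (F z)) := Fcomp_tendsto F hcont hz
  have TFb : Tendsto (fun n : ℕ => F (pb n)) atTop (𝓝 (F y)) := Fcomp_tendsto F hcont hy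
  have Ta : Tendsto pa atTop (𝓝 x) := ceil_div_tendsto x hx
  have Tc : Tendsto pc atTop (𝓝 z) := ceil_div_tendsto z hz.le
  have Tb : Tendsto pb atTop (𝓝 y) := ceil_div_tendsto y hy.le
  have TL : Tendsto (fun n : ℕ => (pb n - pc n) * F (pa n) + (pc n - pa n) * F (pb n))
      atTop (𝓝 ((y - z) * F x + (z - x) * F y)) :=
    ((Tb.sub Tc).mul TFa).add ((Tc.sub Ta).mul TFb)
  have TR : Tendsto (fun n : ℕ => (pb n - pa n) * F (pc n)) atTop (𝓝 ((y - x) * F z)) :=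
    (Tb.sub Ta).mul TFc
  apply le_of_tendsto_of_tendsto TL TR
  -- the eventual inequality
  have hev : ∀ᶠ n : ℕ in atTop,
      (1 : ℕ) ≤ n ∧ (1 : ℝ) < (z - x) * n ∧ (1 : ℝ) < (y - z) * n ∧ (a₀ : ℝ) ≤ x * n ∨
      ((1 : ℕ) ≤ n ∧ (1 : ℝ) < (z - x) * n ∧ (1 : ℝ) < (y - z) * n ∧ a₀ = 0) := by
    rcases hx0 with hx' | hx'
    · have h1 : Tendsto (fun n : ℕ => (z - x) * n) atTop atTop :=
        (tendsto_natCast_atTop_atTop).const_mul_atTop (by linarith)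
      have h2 : Tendsto (fun n : ℕ => (y - z) * n) atTop atTop :=
        (tendsto_natCast_atTop_atTop).const_mul_atTop (by linarith)
      have h3 : Tendsto (fun n : ℕ => x * n) atTop atTop :=
        (tendsto_natCast_atTop_atTop).const_mul_atTop hx'
      filter_upwards [eventually_ge_atTop 1, h1.eventually_gt_atTop 1,
        h2.eventually_gt_atTop 1, h3.eventually_ge_atTop (a₀ : ℝ)] with n e1 e2 e3 e4
      exact Or.inl ⟨e1, e2, e3, e4⟩
    · have h1 : Tendsto (fun n : ℕ => (z - x) * n) atTop atTop :=
        (tendsto_natCast_atTop_atTop).const_mul_atTop (by linarith)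
      have h2 : Tendsto (fun n : ℕ => (y - z) * n) atTop atTop :=
        (tendsto_natCast_atTop_atTop).const_mul_atTop (by linarith)
      filter_upwards [eventually_ge_atTop 1, h1.eventually_gt_atTop 1,
        h2.eventually_gt_atTop 1] with n e1 e2 e3
      exact Or.inr ⟨e1, e2, e3, hx'⟩
  filter_upwards [hev] with n hn
  have hn1 : (1 : ℕ) ≤ n := by rcases hn with h | h; exacts [h.1, h.1]
  have hzx : (1 : ℝ) < (z - x) * n := by rcases hn with h | h; exacts [h.2.1, h.2.1]
  have hyz : (1 : ℝ) < (y - z) * n := by rcases hn with h | h; exacts [h.2.2.1, h.2.2.1]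
  have ha₀ : (a₀ : ℝ) ≤ x * n ∨ a₀ = 0 := by
    rcases hn with h | h; exacts [Or.inl h.2.2.2, Or.inr h.2.2.2]
  have hn' : (0 : ℝ) < n := by exact_mod_cast hn1
  set a : ℕ := ⌈x * n⌉₊ with hadef
  set c : ℕ := ⌈z * n⌉₊ with hcdef
  set b : ℕ := ⌈y * n⌉₊ with hbdef
  have hxa : x * n ≤ (a : ℝ) := Nat.le_ceil _
  have hxa' : (a : ℝ) < x * n + 1 := Nat.ceil_lt_add_one (by positivity)
  have hzc : z * n ≤ (c : ℝ) := Nat.le_ceil _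
  have hzc' : (c : ℝ) < z * n + 1 := Nat.ceil_lt_add_one (by positivity)
  have hyb : y * n ≤ (b : ℝ) := Nat.le_ceil _
  have hyb' : (b : ℝ) < y * n + 1 := Nat.ceil_lt_add_one (by positivity)
  have hac : a < c := by
    have : (a : ℝ) < (c : ℝ) := by nlinarith
    exact_mod_cast this
  have hcb : c < b := by
    have : (c : ℝ) < (b : ℝ) := by nlinarith
    exact_mod_cast this
  have ha₀a : a₀ ≤ a := by
    rcases ha₀ with h | h
    · have : (a₀ : ℝ) ≤ (a : ℝ) := le_trans h hxa
      exact_mod_cast this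
    · omega
  have key := gridC F (ε := 1 / n) (by positivity) a₀ (hgrid (1 / n) (by positivity))
    a c b ha₀a hac hcb
  have e1 : (a : ℝ) * (1 / n) = pa n := by simp [hpa]; ring
  have e2 : (c : ℝ) * (1 / n) = pc n := by simp [hpc]; ring
  have e3 : (b : ℝ) * (1 / n) = pb n := by simp [hpb]; ring
  rw [e1, e2, e3] at key
  have ed1 : pb n - pc n = ((b : ℝ) - c) / n := by simp [hpb, hpc]; ring
  have ed2 : pc n - pa n = ((c : ℝ) - a) / n := by simp [hpc, hpa]; ring
  have ed3 : pb n - pa n = ((b : ℝ) - a) / n := by simp [hpb, hpa]; ring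
  rw [ed1, ed2, ed3]
  have := mul_le_mul_of_nonneg_left key.le (le_of_lt (show (0:ℝ) < 1 / n by positivity))
  calc ((b : ℝ) - c) / n * F (pa n) + ((c : ℝ) - a) / n * F (pb n)
      = 1 / n * (((b : ℝ) - c) * F (pa n) + ((c : ℝ) - a) * F (pb n)) := by ring
    _ ≤ 1 / n * (((b : ℝ) - a) * F (pc n)) := this
    _ = ((b : ℝ) - a) / n * F (pc n) := by ring
/-- Strict concavity-type inequality. -/
lemma strictSC (F : ℝ → ℝ) (hcont : ContinuousOn F (Set.Ioi (0 : ℝ))) (a₀ : ℕ) (ha₀ : a₀ ≤ 1)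
    (hgrid : ∀ ε : ℝ, 0 < ε → ∀ j : ℕ, a₀ ≤ j →
      F ((j : ℝ) * ε) + F (((j : ℝ) + 2) * ε) < 2 * F (((j : ℝ) + 1) * ε))
    {x z y : ℝ} (hx : 0 ≤ x) (hx0 : 0 < x ∨ a₀ = 0)
    (hxz : x < z) (hzy : z < y) :
    (y - z) * F x + (z - x) * F y < (y - x) * F z := by
  rcases (weakD F hcont a₀ hgrid hx hx0 hxz hzy).lt_or_eq with h | heq
  · exact h
  exfalso
  have hyx : (0 : ℝ) < y - x := by linarith
  have eqchord : ∀ t, x < t → t < y → (y - t) * F x + (t - x) * F y = (y - x) * F t := by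
    intro t hxt hty
    have ht0 : 0 < t := lt_of_le_of_lt hx hxt
    have W1 := weakD F hcont a₀ hgrid hx hx0 hxt hty
    rcases lt_trichotomy t z with hc | hc | hc
    · have W2 := weakD F hcont a₀ hgrid ht0.le (Or.inl ht0) hc hzy
      have h1 : (y - x) * ((y - z) * F t + (z - t) * F y) ≤ (y - x) * ((y - t) * F z) :=
        mul_le_mul_of_nonneg_left W2 (by linarith)
      have h2 : (y - t) * ((y - z) * F x + (z - x) * F y) = (y - t) * ((y - x) * F z) := by
        rw [heq]
      have key : (y - z) * ((y - x) * F t) ≤ (y - z) * ((y - t) * F x + (t - x) * F y) := by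
        nlinarith [h1, h2]
      have hrev := le_of_mul_le_mul_left key (by linarith : (0 : ℝ) < y - z)
      exact le_antisymm W1 hrev
    · rw [hc]; exact heq
    · have W2 := weakD F hcont a₀ hgrid hx hx0 hxz hc
      have h1 : (y - x) * ((t - z) * F x + (z - x) * F t) ≤ (y - x) * ((t - x) * F z) :=
        mul_le_mul_of_nonneg_left W2 (by linarith)
      have h2 : (t - x) * ((y - z) * F x + (z - x) * F y) = (t - x) * ((y - x) * F z) := by
        rw [heq]
      have key : (z - x) * ((y - x) * F t) ≤ (z - x) * ((y - t) * F x + (t - x) * F y) := by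
        nlinarith [h1, h2]
      have hrev := le_of_mul_le_mul_left key (by linarith : (0 : ℝ) < z - x)
      exact le_antisymm W1 hrev
  -- three equally spaced grid points inside (x, y)
  set ε : ℝ := (y - x) / 4 with hε
  have hε0 : 0 < ε := by rw [hε]; linarith
  set j : ℕ := ⌊x / ε⌋₊ + 1 with hj
  have hj1 : x < (j : ℝ) * ε := by
    have := Nat.lt_floor_add_one (x / ε)
    have hx' : x / ε < (j : ℝ) := by rw [hj]; push_cast; exact this
    calc x = x / ε * ε := by field_simp
      _ < (j : ℝ) * ε := by apply mul_lt_mul_of_pos_right hx' hε0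
  have hj2 : (j : ℝ) * ε ≤ x + ε := by
    have h1 : (⌊x / ε⌋₊ : ℝ) ≤ x / ε := Nat.floor_le (by positivity)
    have : (j : ℝ) ≤ x / ε + 1 := by rw [hj]; push_cast; linarith
    calc (j : ℝ) * ε ≤ (x / ε + 1) * ε := mul_le_mul_of_nonneg_right this hε0.le
      _ = x + ε := by field_simp
  have ht3 : ((j : ℝ) + 2) * ε < y := by nlinarith
  have ht1y : (j : ℝ) * ε < y := by nlinarith
  have ht2x : x < ((j : ℝ) + 1) * ε := by nlinarith
  have ht2y : ((j : ℝ) + 1) * ε < y := by nlinarith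
  have ht3x : x < ((j : ℝ) + 2) * ε := by nlinarith
  have E1 := eqchord ((j : ℝ) * ε) hj1 ht1y
  have E2 := eqchord (((j : ℝ) + 1) * ε) ht2x ht2y
  have E3 := eqchord (((j : ℝ) + 2) * ε) ht3x ht3
  have hgr := hgrid ε hε0 j (by omega)
  have hsum : (y - x) * (F ((j : ℝ) * ε) + F (((j : ℝ) + 2) * ε))
      = (y - x) * (2 * F (((j : ℝ) + 1) * ε)) := by
    linear_combination 2 * E2 - E1 - E3
  have hcan : F ((j : ℝ) * ε) + F (((j : ℝ) + 2) * ε) = 2 * F (((j : ℝ) + 1) * ε) :=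
    mul_left_cancel₀ (by linarith) hsum
  linarith


theorem real_normalized_two_necessary (f : ℝ → EReal)
    (hfmono : StrictMonoOn f (Set.Ici (0 : ℝ)))
    (hftop : ∀ x : ℝ, 0 ≤ x → f x ≠ ⊤)
    (hfcont : ContinuousOn f (Set.Ioi (0 : ℝ)))
    (hEF1 : (∀ m : ℕ, ∀ u : Fin 2 → Fin m → ℝ, (∀ i g, 0 ≤ u i g) →
        Normalized u → PositiveAdmitting u →
        ∀ A : Fin m → Fin 2, Chosen f u A → EF1 u A)) :
    ∀ x y : ℝ, 0 ≤ x → 0 ≤ y → x ≠ y → ∀ α : ℝ, 0 < α → α < 1 →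
      ((α : EReal) * f x + (((1 - α : ℝ)) : EReal) * f y < f (α * x + (1 - α) * y)) := by
  set F : ℝ → ℝ := fun t => (f t).toReal with hF
  have fbot : ∀ t : ℝ, 0 < t → f t ≠ ⊥ := by
    intro t ht
    have h := hfmono (Set.mem_Ici.2 le_rfl) (Set.mem_Ici.2 ht.le) ht
    exact (lt_of_le_of_lt bot_le h).ne'
  have hfreal : ∀ t : ℝ, 0 < t → f t = ((F t : ℝ) : EReal) := fun t ht =>
    (EReal.coe_toReal (hftop t ht.le) (fbot t ht)).symm
  have hFcont : ContinuousOn F (Set.Ioi (0 : ℝ)) := by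
    intro t ht
    exact ContinuousAt.comp_continuousWithinAt
      (EReal.tendsto_toReal (hftop t (le_of_lt ht)) (fbot t ht)) (hfcont t ht)
  have gridR : ∀ a₀ : ℕ, (a₀ = 0 → f 0 ≠ ⊥) → ∀ ε : ℝ, 0 < ε → ∀ j : ℕ, a₀ ≤ j →
      F ((j : ℝ) * ε) + F (((j : ℝ) + 2) * ε) < 2 * F (((j : ℝ) + 1) * ε) := by
    intro a₀ h0 ε hε j hj
    have H := lemA f hEF1 hε j
    have hbj : f ((j : ℝ) * ε) ≠ ⊥ := by
      rcases Nat.eq_zero_or_pos j with hj0 | hj0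
      · subst hj0
        simpa using h0 (by omega)
      · apply fbot
        have : (0 : ℝ) < (j : ℝ) := by exact_mod_cast hj0
        positivity
    have hp1 : (0 : ℝ) < ((j : ℝ) + 1) * ε := by positivity
    have hp2 : (0 : ℝ) < ((j : ℝ) + 2) * ε := by positivity
    have hnn : (0 : ℝ) ≤ (j : ℝ) * ε := by positivity
    have e1 : f ((j : ℝ) * ε) = ((F ((j : ℝ) * ε) : ℝ) : EReal) :=
      (EReal.coe_toReal (hftop _ hnn) hbj).symm
    rw [e1, hfreal _ hp1, hfreal _ hp2] at H
    rw [← EReal.coe_add, ← EReal.coe_add, EReal.coe_lt_coe_iff] at H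
    linarith
  have key : ∀ x y α : ℝ, 0 ≤ x → x < y → 0 < α → α < 1 →
      (α : EReal) * f x + (((1 - α : ℝ)) : EReal) * f y < f (α * x + (1 - α) * y) := by
    intro x y α hx hxy hα0 hα1
    set z := α * x + (1 - α) * y with hz
    have hxz : x < z := by rw [hz]; nlinarith
    have hzy : z < y := by rw [hz]; nlinarith
    have hz0 : 0 < z := lt_of_le_of_lt hx hxz
    have hy0 : 0 < y := by linarith
    have hyx : (0 : ℝ) < y - x := by linarith
    rcases hx.lt_or_eq with hx' | hx'
    · have hstrict := strictSC F hFcont 1 le_rfl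
        (gridR 1 (fun h => absurd h one_ne_zero)) hx'.le (Or.inl hx') hxz hzy
      have h1 : y - z = α * (y - x) := by rw [hz]; ring
      have h2 : z - x = (1 - α) * (y - x) := by rw [hz]; ring
      rw [h1, h2] at hstrict
      have h3 : (y - x) * (α * F x + (1 - α) * F y) < (y - x) * F z := by nlinarith
      have hr : α * F x + (1 - α) * F y < F z := (mul_lt_mul_iff_right₀ hyx).1 h3
      rw [hfreal x hx', hfreal y hy0, hfreal z hz0,
        ← EReal.coe_mul, ← EReal.coe_mul, ← EReal.coe_add]
      exact_mod_cast hr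
    · subst hx'
      by_cases hb : f 0 = ⊥
      · rw [hb, EReal.coe_mul_bot_of_pos (by exact_mod_cast hα0), hfreal y hy0,
          ← EReal.coe_mul, EReal.bot_add, hfreal z hz0]
        exact EReal.bot_lt_coe _
      · have hstrict := strictSC F hFcont 0 (by omega)
          (gridR 0 (fun _ => hb)) le_rfl (Or.inr rfl) hxz hzy
        have h1 : y - z = α * (y - 0) := by rw [hz]; ring
        have h2 : z - 0 = (1 - α) * (y - 0) := by rw [hz]; ring
        rw [h1, h2] at hstrict
        have h3 : (y - 0) * (α * F 0 + (1 - α) * F y) < (y - 0) * F z := by nlinarith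
        have hr : α * F 0 + (1 - α) * F y < F z := (mul_lt_mul_iff_right₀ (by linarith)).1 h3
        have e0 : f 0 = ((F 0 : ℝ) : EReal) := (EReal.coe_toReal (hftop 0 le_rfl) hb).symm
        rw [e0, hfreal y hy0, hfreal z hz0,
          ← EReal.coe_mul, ← EReal.coe_mul, ← EReal.coe_add]
        exact_mod_cast hr
  intro x y hx hy hxy α hα0 hα1
  rcases hxy.lt_or_gt with h | h
  · exact key x y α hx h hα0 hα1
  · have hk := key y x (1 - α) hy h (by linarith) (by linarith)
    have e1 : (1 - (1 - α)) = α := by ring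
    rw [e1] at hk
    have e2 : (1 - α) * y + α * x = α * x + (1 - α) * y := by ring
    rw [e2] at hk
    rwa [add_comm] at hk


end FairDiv
end
end
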